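/- Let N ≥ 2 and I ⊆ {1,…,N−1}. Then the N−1 vectors { f_j : j ∈ {1,…,N−1}, j ∉ I } ∪ { e_i : i ∈ I } form a basis of the hyperplane 𝔥 = { x ∈ ℝ^N : x₁ + ⋯ + x_N = 0 }. -/

import Mathlib

open BigOperators

/-- The simple-root vector `f_{k+1}` (1-based index `k+1`, `k : Fin (N-1)`):
coordinate `1` at position `k`, `-1` at position `k+1` (0-based), `0` elsewhere. -/
def fvec (N : ℕ) (k : Fin (N - 1)) : Fin N → ℝ := fun j =>
  if (j : ℕ) = (k : ℕ) then 1 else if (j : ℕ) = (k : ℕ) + 1 then -1 else 0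

/-- The coweight vector `e_{k+1}` (1-based index `m = k+1`, `k : Fin (N-1)`): the first `m`
coordinates equal `(N - m)/N` and the remaining `N - m` coordinates equal `-m/N`. -/
noncomputable def evec (N : ℕ) (k : Fin (N - 1)) : Fin N → ℝ := fun j =>
  if (j : ℕ) < (k : ℕ) + 1 then ((N : ℝ) - ((k : ℕ) + 1)) / N else -(((k : ℕ) + 1 : ℕ) : ℝ) / N

/-- Summing the coordinates, as a linear map `(Fin N → ℝ) →ₗ[ℝ] ℝ`. -/

lemma hk1 {N : ℕ} (k : Fin (N-1)) : (k : ℕ) + 1 < N := by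
  have := k.isLt; omega

lemma hk0 {N : ℕ} (k : Fin (N-1)) : (k : ℕ) < N := by
  have := k.isLt; omega

lemma castN_ne {N : ℕ} (k : Fin (N-1)) : (N:ℝ) ≠ 0 :=
  Nat.cast_ne_zero.mpr (by have := hk1 k; omega)

lemma dot_fvec {N : ℕ} (x : Fin N → ℝ) (k : Fin (N-1)) :
    ∑ j, x j * fvec N k j = x ⟨k, hk0 k⟩ - x ⟨(k:ℕ)+1, hk1 k⟩ := by
  have h : ∀ j : Fin N, x j * fvec N k j =
      (if j = (⟨k, hk0 k⟩ : Fin N) then x j else 0)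
      - (if j = (⟨(k:ℕ)+1, hk1 k⟩ : Fin N) then x j else 0) := by
    intro j
    simp only [fvec, Fin.ext_iff]
    split_ifs with h1 h2 <;> first | omega | ring
  rw [Finset.sum_congr rfl (fun j _ => h j), Finset.sum_sub_distrib]
  simp

lemma dot_evec_fvec {N : ℕ} (i k : Fin (N-1)) :
    ∑ j, evec N i j * fvec N k j = if i = k then 1 else 0 := by
  have hN : (N:ℝ) ≠ 0 := castN_ne i
  rw [dot_fvec]
  simp only [evec, Fin.ext_iff]
  rcases lt_trichotomy (i:ℕ) (k:ℕ) with h | h | h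
  · rw [if_neg (by omega), if_neg (by omega), if_neg (by omega)]; ring
  · rw [if_pos (by omega), if_neg (by omega), if_pos (by omega)]
    field_simp
    push_cast; ring
  · rw [if_pos (by omega), if_pos (by omega), if_neg (by omega)]; ring

lemma sum_fvec {N : ℕ} (k : Fin (N-1)) : ∑ j, fvec N k j = 0 := by
  have := dot_fvec (fun _ => (1:ℝ)) k
  simpa using this

lemma sum_evec {N : ℕ} (k : Fin (N-1)) : ∑ j, evec N k j = 0 := by
  have hm : (k:ℕ) + 1 ≤ N := le_of_lt (hk1 k)
  have hN : (N:ℝ) ≠ 0 := castN_ne k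
  have h1 : ∑ j : Fin N, evec N k j = ∑ j ∈ Finset.range N,
      (if j < (k:ℕ)+1 then ((N : ℝ) - (((k:ℕ)+1 : ℕ) : ℝ)) / N else -(((k:ℕ)+1 : ℕ):ℝ) / N) := by
    rw [← Fin.sum_univ_eq_sum_range]
    apply Finset.sum_congr rfl
    intro j _
    simp [evec]
  rw [h1, Finset.range_eq_Ico, ← Finset.sum_Ico_consecutive _ (Nat.zero_le ((k:ℕ)+1)) hm]
  rw [Finset.sum_congr rfl (fun j hj => if_pos (Finset.mem_Ico.mp hj).2),
      Finset.sum_congr rfl (fun j hj => if_neg (by have := (Finset.mem_Ico.mp hj).1; omega))]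
  simp only [Finset.sum_const, Nat.card_Ico, smul_eq_mul, Nat.sub_zero]
  rw [nsmul_eq_mul, nsmul_eq_mul, Nat.cast_sub hm]
  push_cast
  field_simp
  ring


def sumLM (N : ℕ) : (Fin N → ℝ) →ₗ[ℝ] ℝ where
  toFun x := ∑ j, x j
  map_add' x y := by simp [Finset.sum_add_distrib]
  map_smul' c x := by simp [Finset.mul_sum]


lemma swap_sum {N : ℕ} (s : Finset (Fin (N-1))) (g : Fin (N-1) → ℝ)
    (v : Fin (N-1) → Fin N → ℝ) (y : Fin N → ℝ) :
    ∑ j, (∑ k ∈ s, g k * v k j) * y j = ∑ k ∈ s, g k * ∑ j, v k j * y j := by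
  simp only [Finset.sum_mul, Finset.mul_sum]
  rw [Finset.sum_comm]
  apply Finset.sum_congr rfl; intro k _
  apply Finset.sum_congr rfl; intro j _
  ring


lemma swap_sum' {N : ℕ} (s : Finset (Fin (N-1))) (g : Fin (N-1) → ℝ)
    (v : Fin (N-1) → Fin N → ℝ) (y : Fin N → ℝ) :
    ∑ j, y j * (∑ k ∈ s, g k * v k j) = ∑ k ∈ s, g k * ∑ j, y j * v k j := by
  simp only [Finset.sum_mul, Finset.mul_sum]
  rw [Finset.sum_comm]
  apply Finset.sum_congr rfl; intro k _
  apply Finset.sum_congr rfl; intro j _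
  ring


/-- For any `I ⊆ {1,…,N-1}`, the vectors `{f_j : j ∉ I} ∪ {e_i : i ∈ I}` form a basis of
the hyperplane `𝔥 = {x ∈ ℝᴺ : x₁ + ⋯ + x_N = 0}`. -/
theorem stmt11 (N : ℕ) (hN : 2 ≤ N) (I : Finset (Fin (N - 1))) :
    (∀ k : Fin (N - 1), (if k ∈ I then evec N k else fvec N k) ∈ LinearMap.ker (sumLM N)) ∧
    LinearIndependent ℝ (fun k : Fin (N - 1) => if k ∈ I then evec N k else fvec N k) ∧
    Submodule.span ℝ (Set.range fun k : Fin (N - 1) => if k ∈ I then evec N k else fvec N k) =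
      LinearMap.ker (sumLM N) := by
  have hker : ∀ k : Fin (N - 1), (if k ∈ I then evec N k else fvec N k) ∈ LinearMap.ker (sumLM N) := by
    intro k
    rw [LinearMap.mem_ker]
    show ∑ j, (if k ∈ I then evec N k else fvec N k) j = 0
    split_ifs with hk
    · exact sum_evec k
    · exact sum_fvec k
  have hindep : LinearIndependent ℝ (fun k : Fin (N - 1) => if k ∈ I then evec N k else fvec N k) := by
    rw [Fintype.linearIndependent_iff]
    intro g hg
    set w : Fin N → ℝ := fun j => ∑ k ∈ I, g k * evec N k j with hw
    set u : Fin N → ℝ := fun j => ∑ k ∈ Iᶜ, g k * fvec N k j with hu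
    have hwu : ∀ j, w j + u j = 0 := by
      intro j
      have h0 := congrFun hg j
      simp only [Finset.sum_apply, Pi.smul_apply, smul_eq_mul, Pi.zero_apply] at h0
      rw [hw, hu]
      rw [← h0, ← Finset.sum_add_sum_compl I]
      congr 1
      · exact Finset.sum_congr rfl (fun k hk => by rw [if_pos hk])
      · exact Finset.sum_congr rfl (fun k hk => by rw [if_neg (Finset.mem_compl.mp hk)])
    have hdot_wf : ∀ t, ∑ j, w j * fvec N t j = if t ∈ I then g t else 0 := by
      intro t
      rw [hw]
      rw [swap_sum I g (evec N) (fvec N t)]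
      simp only [dot_evec_fvec, mul_ite, mul_one, mul_zero]
      exact Finset.sum_ite_eq' I t g
    have hdot_eu : ∀ t, ∑ j, evec N t j * u j = if t ∈ Iᶜ then g t else 0 := by
      intro t
      rw [hu]
      rw [swap_sum' Iᶜ g (fvec N) (evec N t)]
      simp only [dot_evec_fvec, mul_ite, mul_one, mul_zero]
      exact Finset.sum_ite_eq Iᶜ t g
    have hww : ∑ j, w j * w j = 0 := by
      have h1 : ∑ j, w j * (w j + u j) = 0 := by
        apply Finset.sum_eq_zero; intro j _; rw [hwu j, mul_zero]
      have h2 : ∑ j, w j * u j = 0 := by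
        rw [hu, swap_sum' Iᶜ g (fvec N) w]
        apply Finset.sum_eq_zero; intro k hk
        rw [hdot_wf k, if_neg (Finset.mem_compl.mp hk), mul_zero]
      have h3 : ∑ j, (w j * w j + w j * u j) = 0 := by
        apply Finset.sum_congr rfl (fun j _ => by ring) |>.trans h1
      rw [Finset.sum_add_distrib, h2, add_zero] at h3
      exact h3
    have hw0 : ∀ j, w j = 0 := by
      intro j
      have := (Finset.sum_eq_zero_iff_of_nonneg
        (fun j _ => mul_self_nonneg (w j))).mp hww j (Finset.mem_univ j)
      exact mul_self_eq_zero.mp this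
    have hu0 : ∀ j, u j = 0 := by
      intro j
      have := hwu j
      rw [hw0 j, zero_add] at this
      exact this
    intro k
    by_cases hk : k ∈ I
    · have h := hdot_wf k
      rw [if_pos hk] at h
      rw [← h]
      apply Finset.sum_eq_zero; intro j _; rw [hw0 j, zero_mul]
    · have h := hdot_eu k
      rw [if_pos (Finset.mem_compl.mpr hk)] at h
      rw [← h]
      apply Finset.sum_eq_zero; intro j _; rw [hu0 j, mul_zero]
  refine ⟨hker, hindep, ?_⟩
  have hNne : (N:ℝ) ≠ 0 := Nat.cast_ne_zero.mpr (by omega)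
  have hsurj : Function.Surjective (sumLM N) := by
    intro c
    refine ⟨fun _ => c / N, ?_⟩
    show ∑ _j : Fin N, c / N = c
    rw [Finset.sum_const, Finset.card_univ, Fintype.card_fin, nsmul_eq_mul]
    field_simp
  have hrank : Module.finrank ℝ (LinearMap.ker (sumLM N)) = N - 1 := by
    have h := LinearMap.finrank_range_add_finrank_ker (sumLM N)
    rw [LinearMap.range_eq_top.mpr hsurj, finrank_top, Module.finrank_self,
      Module.finrank_fin_fun] at h
    omega
  have hle : Submodule.span ℝ (Set.range fun k : Fin (N - 1) =>
      if k ∈ I then evec N k else fvec N k) ≤ LinearMap.ker (sumLM N) := by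
    rw [Submodule.span_le]
    rintro _ ⟨k, rfl⟩
    exact hker k
  apply Submodule.eq_of_le_of_finrank_eq hle
  rw [finrank_span_eq_card hindep, hrank, Fintype.card_fin]
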